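/- Let t, w ∈ ℂ and φ, l, s ∈ ℝ, and suppose e^φ > |t| (the pointwise cosh-Gordon nondegeneracy condition ρ > |t|²ρ⁻¹ with ρ = e^φ). If (w, s) ≠ (0, 0), then s² + 4·e^φ·|w|²·cosh²(l) + 4·|t|²·e^{−φ}·|w|²·sinh²(l) − 8·Re(t·w²)·cosh(l)·sinh(l) > 0. In particular, the quadratic form of the 3-dimensional metric induced by a cosh-Gordon metric is positive definite for every l ∈ ℝ. -/

import Mathlib

open Complex

/-- Under the cosh-Gordon nondegeneracy condition e^φ > |t|, the quadratic form of the induced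
3-dimensional metric is positive definite: for (w, s) ≠ (0, 0) and any height l,
s² + 4e^φ|w|²cosh²l + 4|t|²e^{−φ}|w|²sinh²l − 8Re(tw²)cosh l sinh l > 0. -/
theorem coshGordon_metric_posdef
    (t w : ℂ) (φ l s : ℝ)
    (hnd : ‖t‖ < Real.exp φ)
    (hws : (w, s) ≠ (0, 0)) :
    0 < s ^ 2 + 4 * Real.exp φ * ‖w‖ ^ 2 * Real.cosh l ^ 2
        + 4 * ‖t‖ ^ 2 * Real.exp (-φ) * ‖w‖ ^ 2 * Real.sinh l ^ 2
        - 8 * (t * w ^ 2).re * Real.cosh l * Real.sinh l := by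
  have ht0 : 0 ≤ ‖t‖ := norm_nonneg t
  have hc1 : (1:ℝ) ≤ Real.cosh l := Real.one_le_cosh l
  have hcp : (0:ℝ) < Real.cosh l := Real.cosh_pos l
  have hsq : Real.cosh l ^ 2 - Real.sinh l ^ 2 = 1 := Real.cosh_sq_sub_sinh_sq l
  have hre : |(t * w ^ 2).re| ≤ ‖t‖ * ‖w‖ ^ 2 := by
    calc |(t * w ^ 2).re| ≤ ‖t * w ^ 2‖ := Complex.abs_re_le_norm _
    _ = ‖t‖ * ‖w‖ ^ 2 := by rw [norm_mul, norm_pow]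
  have hexp : Real.exp φ * Real.exp (-φ) = 1 := by rw [← Real.exp_add]; simp
  have hen : (0:ℝ) < Real.exp (-φ) := Real.exp_pos (-φ)
  rcases eq_or_ne w 0 with hw | hw
  · have hs : s ≠ 0 := by
      intro hs; exact hws (by simp [hw, hs, Prod.ext_iff])
    have hs2 : (0:ℝ) < s ^ 2 := by positivity
    simp only [hw, map_zero, norm_zero, zero_pow, ne_eq, OfNat.ofNat_ne_zero, not_false_eq_true,
      mul_zero, zero_mul, Complex.zero_re]
    linarith
  · have hw0 : 0 < ‖w‖ := norm_pos_iff.mpr hw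
    have hsc : |Real.sinh l| < Real.cosh l := by
      nlinarith [abs_nonneg (Real.sinh l), _root_.sq_abs (Real.sinh l)]
    have habs : |(t * w ^ 2).re * (Real.cosh l * Real.sinh l)| ≤
        ‖t‖ * ‖w‖ ^ 2 * (Real.cosh l * |Real.sinh l|) := by
      rw [abs_mul, abs_mul, abs_of_pos hcp]
      exact mul_le_mul hre le_rfl (by positivity) (by positivity)
    have key : ‖t‖ * |Real.sinh l| < Real.exp φ * Real.cosh l := by
      calc ‖t‖ * |Real.sinh l| ≤ ‖t‖ * Real.cosh l :=
            mul_le_mul_of_nonneg_left hsc.le ht0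
      _ < Real.exp φ * Real.cosh l := by
            exact mul_lt_mul_of_pos_right hnd hcp
    have key2 : Real.exp (-φ) * (Real.exp φ * Real.cosh l - ‖t‖ * |Real.sinh l|) ^ 2
        = Real.exp φ * Real.cosh l ^ 2
          - 2 * ‖t‖ * Real.cosh l * |Real.sinh l|
          + ‖t‖ ^ 2 * Real.exp (-φ) * Real.sinh l ^ 2 := by
      have h1 := _root_.sq_abs (Real.sinh l)
      linear_combination (Real.exp φ * Real.cosh l ^ 2
          - 2 * ‖t‖ * Real.cosh l * |Real.sinh l|) * hexp
        + ‖t‖ ^ 2 * Real.exp (-φ) * h1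
    have key3 : 0 < ‖w‖ ^ 2 * (Real.exp φ * Real.cosh l ^ 2
          - 2 * ‖t‖ * Real.cosh l * |Real.sinh l|
          + ‖t‖ ^ 2 * Real.exp (-φ) * Real.sinh l ^ 2) := by
      apply mul_pos (pow_pos hw0 2)
      rw [← key2]
      exact mul_pos hen (pow_pos (sub_pos.2 key) 2)
    have hRe2 : -(‖t‖ * ‖w‖ ^ 2 * (Real.cosh l * |Real.sinh l|))
        ≤ -((t * w ^ 2).re * (Real.cosh l * Real.sinh l)) := by
      have := le_abs_self ((t * w ^ 2).re * (Real.cosh l * Real.sinh l))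
      linarith
    nlinarith [key3, hRe2, sq_nonneg s]
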